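/- Suppose the partition $\mathcal{P} = (P_1,\ldots,P_{t-1})$ of a vertex set $V$ is stable to the partition $\mathcal{V} = (V_1,\ldots,V_r)$ (with $|V_i| = n_i$, $n_1 \geq \cdots \geq n_r$). Then the integral part of every class of $\mathcal{P}$ has size at least $n_{t-1}$. -/
import Mathlib


/-- The class `A` is partial in the part `Pj`: it meets `Pj` but is not contained in it. -/
def PartIn {V : Type*} (A Pj : Set V) : Prop :=
  (A ∩ Pj).Nonempty ∧ ¬ A ⊆ Pj

/-- The integral part of `Pj`: the union of those classes `Vf i` contained in `Pj`. -/
def intPart {V : Type*} {r : ℕ} (Vf : Fin r → Set V) (Pj : Set V) : Set V :=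
  {v | ∃ i, v ∈ Vf i ∧ Vf i ⊆ Pj}

/-- The partition `Pf` is stable to `Vf`:
(i) each part contains at most one partial class;
(ii) the integral parts of partial parts all have equal size, at most the size of every
integral part;
(iii) the integral part of every part has size at least that of every partial class;
(iv) removing any integral class from its part leaves a set no larger than the integral
part of any other part. -/
def StableTo {V : Type*} {r s : ℕ} (Vf : Fin r → Set V) (Pf : Fin s → Set V) : Prop :=
  (∀ j, ∀ i i', PartIn (Vf i) (Pf j) → PartIn (Vf i') (Pf j) → i = i') ∧
  (∀ j j', (∃ i, PartIn (Vf i) (Pf j)) → (∃ i, PartIn (Vf i) (Pf j')) →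
    (intPart Vf (Pf j)).ncard = (intPart Vf (Pf j')).ncard) ∧
  (∀ j j', (∃ i, PartIn (Vf i) (Pf j)) → (¬ ∃ i, PartIn (Vf i) (Pf j')) →
    (intPart Vf (Pf j)).ncard ≤ (Pf j').ncard) ∧
  (∀ j i, (∃ j', PartIn (Vf i) (Pf j')) → (Vf i).ncard ≤ (intPart Vf (Pf j)).ncard) ∧
  (∀ j j' i, j ≠ j' → Vf i ⊆ Pf j →
    (Pf j \ Vf i).ncard ≤ (intPart Vf (Pf j')).ncard)

/-- If `𝒫 = (P₁,…,P_{t-1})` is stable to `𝒱 = (V₁,…,V_r)` (with `|V_i| = n_i`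
antitone), then the integral part of every part of `𝒫` has size at least `n_{t-1}`. -/
theorem stmt9 {V : Type*} [Fintype V] (r t : ℕ) (ht : 3 ≤ t) (hr : t ≤ r)
    (Vf : Fin r → Set V) (Pf : Fin (t - 1) → Set V)
    (hVpart : ∀ x : V, ∃! i, x ∈ Vf i) (hPpart : ∀ x : V, ∃! j, x ∈ Pf j)
    (hne : ∀ i, (Vf i).Nonempty)
    (hmono : ∀ i i' : Fin r, i ≤ i' → (Vf i').ncard ≤ (Vf i).ncard)
    (hstab : StableTo Vf Pf) :
    ∀ j, (Vf ⟨t - 2, by omega⟩).ncard ≤ (intPart Vf (Pf j)).ncard := by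

  obtain ⟨hone, htwo, hthree, hfour, hfive⟩ := hstab
  have hrr : t - 1 ≤ r := by omega
  set e : Fin (t-1) → Fin r := fun k => ⟨k.val, by omega⟩ with he
  have hbig : ∀ k : Fin (t-1), (Vf ⟨t-2, by omega⟩).ncard ≤ (Vf (e k)).ncard := by
    intro k
    exact hmono (e k) ⟨t-2, by omega⟩ (by simp only [he, Fin.le_def]; omega)
  by_cases hcase : ∃ i : Fin r, i.val ≤ t - 2 ∧ ∃ j', PartIn (Vf i) (Pf j')
  · obtain ⟨i, hi, hp⟩ := hcase
    intro j
    exact le_trans (hmono i ⟨t-2, by omega⟩ (by simp [Fin.le_def, hi])) (hfour j i hp)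
  · push_neg at hcase
    have hcont : ∀ k : Fin (t-1), ∃ j, Vf (e k) ⊆ Pf j := by
      intro k
      obtain ⟨x, hx⟩ := hne (e k)
      obtain ⟨j, hj, -⟩ := hPpart x
      refine ⟨j, ?_⟩
      by_contra hns
      exact hcase (e k) (by simp only [he]; omega) j ⟨⟨x, hx, hj⟩, hns⟩
    choose f hf using hcont
    intro j
    by_cases hsurj : ∃ k, f k = j
    · obtain ⟨k, hk⟩ := hsurj
      have hsub : Vf (e k) ⊆ intPart Vf (Pf j) := fun v hv => ⟨e k, hv, hk ▸ hf k⟩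
      exact le_trans (hbig k) (Set.ncard_le_ncard hsub (Set.toFinite _))
    · have hninj : ¬ Function.Injective f := by
        intro hinj
        exact hsurj ((Finite.injective_iff_surjective.mp hinj) j)
      obtain ⟨k1, k2, hfk, hk12⟩ := Function.not_injective_iff.mp hninj
      have hjne : f k1 ≠ j := fun h => hsurj ⟨k1, h⟩
      have hene : e k1 ≠ e k2 := by
        intro h
        have hv := congrArg Fin.val h
        simp only [he] at hv
        exact hk12 (Fin.ext hv)
      have hsub2 : Vf (e k2) ⊆ Pf (f k1) \ Vf (e k1) := by
        intro v hv
        refine ⟨(hfk ▸ hf k2) hv, fun hv1 => ?_⟩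
        obtain ⟨i, -, huniq⟩ := hVpart v
        exact hene ((huniq _ hv1).trans (huniq _ hv).symm)
      calc (Vf ⟨t-2, by omega⟩).ncard ≤ (Vf (e k2)).ncard := hbig k2
        _ ≤ (Pf (f k1) \ Vf (e k1)).ncard := Set.ncard_le_ncard hsub2 (Set.toFinite _)
        _ ≤ _ := hfive (f k1) j (e k1) hjne (hf k1)
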